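/- Let E be a finite-dimensional real inner product space, M : E → E a monotone linear operator (⟨M u, u⟩ ≥ 0 for all u), and D : E → E a self-adjoint linear operator with 0 ≺ D ≺ I (i.e., ⟨Du,u⟩ > 0 and ⟨(I - D)u,u⟩ > 0 for all u ≠ 0). Then the block operator (u,v) ↦ ((I - D)u + Dv, Mu - v) on E × E is invertible. -/
import Mathlib


open RealInnerProductSpace

theorem stmt_7 {E : Type*} [NormedAddCommGroup E] [InnerProductSpace ℝ E]
    [FiniteDimensional ℝ E]
    (M D : E →ₗ[ℝ] E)
    (hM : ∀ u : E, 0 ≤ ⟪M u, u⟫)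
    (hDsa : ∀ u v : E, ⟪D u, v⟫ = ⟪u, D v⟫)
    (hD : ∀ u : E, u ≠ 0 → 0 < ⟪D u, u⟫)
    (hDI : ∀ u : E, u ≠ 0 → 0 < ⟪u - D u, u⟫) :
    Function.Bijective (fun w : E × E => (w.1 - D w.1 + D w.2, M w.1 - w.2)) := by
  set L : E × E →ₗ[ℝ] E × E :=
    { toFun := fun w => (w.1 - D w.1 + D w.2, M w.1 - w.2)
      map_add' := by
        intro a b
        simp only [Prod.fst_add, Prod.snd_add, map_add, Prod.mk_add_mk, Prod.mk.injEq]
        constructor <;> abel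
      map_smul' := by
        intro c a
        simp only [Prod.smul_fst, Prod.smul_snd, map_smul, RingHom.id_apply,
          Prod.smul_mk, Prod.mk.injEq, smul_sub, smul_add] } with hL
  have hinj : Function.Injective L := by
    rw [← LinearMap.ker_eq_bot, LinearMap.ker_eq_bot']
    intro w hw
    obtain ⟨u, v⟩ := w
    have h1 : u - D u + D v = 0 := congrArg Prod.fst hw
    have h2 : M u - v = 0 := congrArg Prod.snd hw
    have hv : v = M u := by linear_combination (norm := abel) -h2
    have key : ⟪u - D u, u⟫ + ⟪D v, v⟫ + ⟪M u, u⟫ = 0 := by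
      have h0 : ⟪u - D u + D v, u + v⟫ = 0 := by rw [h1, inner_zero_left]
      have expand : ⟪u - D u + D v, u + v⟫
          = ⟪u - D u, u⟫ + ⟪D v, v⟫ + (⟪u - D u, v⟫ + ⟪D v, u⟫) := by
        rw [inner_add_left, inner_add_right, inner_add_right]; ring
      have cross : ⟪u - D u, v⟫ + ⟪D v, u⟫ = ⟪M u, u⟫ := by
        have e1 : ⟪u - D u, v⟫ = ⟪u, v⟫ - ⟪u, D v⟫ := by
          rw [inner_sub_left, hDsa]
        have e2 : ⟪D v, u⟫ = ⟪u, D v⟫ := real_inner_comm _ _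
        have e3 : ⟪u, v⟫ = ⟪M u, u⟫ := by
          rw [hv, real_inner_comm]
        rw [e1, e2, e3]; ring
      rw [expand, cross] at h0
      exact h0
    have hBnn : 0 ≤ ⟪u - D u, u⟫ := by
      rcases eq_or_ne u 0 with h | h
      · simp [h]
      · exact (hDI u h).le
    have hAnn : 0 ≤ ⟪D v, v⟫ := by
      rcases eq_or_ne v 0 with h | h
      · simp [h]
      · exact (hD v h).le
    have hMnn := hM u
    have hu : u = 0 := by
      by_contra h
      have := hDI u h
      linarith
    have hv0 : v = 0 := by
      by_contra h
      have := hD v h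
      linarith
    simp [hu, hv0]
  have hsurj : Function.Surjective L :=
    (LinearMap.injective_iff_surjective).mp hinj
  exact ⟨hinj, hsurj⟩
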